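/- Let G be a finite group of order n acting transitively on a finite set X with #X = m > 2, and let k be an integer with 1 ≤ k ≤ m − 1. Then α(G) ≥ k·n/m − k³·n/(m−2)² (as real numbers). -/

import Mathlib

/-- A subset `S` of a group is product-free if there are no `a, b, c ∈ S`
(not necessarily distinct) with `a * b = c`. -/
def IsProductFree {G : Type*} [Group G] (S : Finset G) : Prop :=
  ∀ a ∈ S, ∀ b ∈ S, ∀ c ∈ S, a * b ≠ c

/-- `α(G)`: the largest cardinality of a product-free subset of `G`. -/
noncomputable def alphaPF (G : Type*) [Group G] [Fintype G] : ℕ :=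
  sSup {k | ∃ S : Finset G, IsProductFree S ∧ S.card = k}

set_option linter.unusedSectionVars false
set_option linter.unusedVariables false

lemma alphaPF_ge {G : Type*} [Group G] [Fintype G] (S : Finset G) (h : IsProductFree S) :
    S.card ≤ alphaPF G := by
  apply le_csSup
  · exact ⟨Fintype.card G, by rintro j ⟨S', -, rfl⟩; exact Finset.card_le_univ S'⟩
  · exact ⟨S, h, rfl⟩

section PF

variable {X : Type*} [Fintype X] [DecidableEq X] {G : Type*} [Group G] [Fintype G] [DecidableEq G] [MulAction G X]

/-- The candidate product-free set associated to `T ⊆ X`. -/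
def pfGood (G : Type*) [Group G] [Fintype G] [MulAction G X] (x₀ : X) (T : Finset X) : Finset G :=
  Finset.univ.filter (fun g => g • x₀ ∈ T ∧ ∀ y ∈ T, g • y ∉ T)

def pfBad (G : Type*) [Group G] [Fintype G] [MulAction G X] (x₀ : X) (T : Finset X) : Finset G :=
  Finset.univ.filter (fun g => g • x₀ ∈ T ∧ ∃ y ∈ T, g • y ∈ T)

def pfTriple (x₀ : X) (g : G) (y : X) : Finset X := insert (g • x₀) (insert y {g • y})

lemma pfGood_productFree (x₀ : X) (T : Finset X) : IsProductFree (pfGood G x₀ T) := by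
  intro a ha b hb c hc habc
  simp only [pfGood, Finset.mem_filter] at ha hb hc
  refine ha.2.2 (b • x₀) hb.2.1 ?_
  rw [← mul_smul, habc]
  exact hc.2.1

lemma cardA_le (x₀ : X) (T : Finset X) :
    (Finset.univ.filter (fun g : G => g • x₀ ∈ T)).card
      ≤ (pfGood G x₀ T).card + (pfBad G x₀ T).card := by
  refine le_trans (Finset.card_le_card ?_) (Finset.card_union_le _ _)
  intro g hg
  simp only [Finset.mem_filter] at hg
  by_cases h : ∃ y ∈ T, g • y ∈ T
  · exact Finset.mem_union_right _ (by simp [pfBad, hg.2, h])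
  · push_neg at h
    exact Finset.mem_union_left _ (by simp [pfGood, hg.2]; exact h)

lemma card_bad_le (x₀ : X) (T : Finset X) :
    (pfBad G x₀ T).card
      ≤ ∑ g : G, ∑ y : X, if pfTriple x₀ g y ⊆ T then (1:ℕ) else 0 := by
  rw [Finset.card_eq_sum_ones]
  calc ∑ _g ∈ pfBad G x₀ T, 1
      ≤ ∑ g ∈ pfBad G x₀ T, ∑ y : X, (if pfTriple x₀ g y ⊆ T then (1:ℕ) else 0) := by
        apply Finset.sum_le_sum
        intro g hg
        simp only [pfBad, Finset.mem_filter] at hg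
        obtain ⟨-, hgx, y₀, hy₀T, hgy₀⟩ := hg
        have hsub : pfTriple x₀ g y₀ ⊆ T := by
          simp [pfTriple, Finset.insert_subset_iff, hgx, hy₀T, hgy₀]
        calc (1 : ℕ) = (if pfTriple x₀ g y₀ ⊆ T then (1:ℕ) else 0) := by rw [if_pos hsub]
          _ ≤ ∑ y : X, (if pfTriple x₀ g y ⊆ T then (1:ℕ) else 0) :=
              Finset.single_le_sum (f := fun y => if pfTriple x₀ g y ⊆ T then (1:ℕ) else 0)
                (fun y _ => Nat.zero_le _) (Finset.mem_univ y₀)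
    _ ≤ ∑ g : G, ∑ y : X, (if pfTriple x₀ g y ⊆ T then (1:ℕ) else 0) :=
        Finset.sum_le_sum_of_subset (Finset.subset_univ _)

end PF

/-- Number of `k`-subsets of a fintype containing a fixed finset `P`. -/
lemma card_supersets {X : Type*} [Fintype X] [DecidableEq X] (P : Finset X) (k : ℕ) :
    ((Finset.powersetCard k (Finset.univ : Finset X)).filter (fun T => P ⊆ T)).card
      = if P.card ≤ k then (Fintype.card X - P.card).choose (k - P.card) else 0 := by
  split_ifs with h
  · rw [← Finset.card_univ, ← Finset.card_sdiff_of_subset (Finset.subset_univ P),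
      ← Finset.card_powersetCard]
    apply Finset.card_bij (fun T _ => T \ P)
    · intro T hT
      simp only [Finset.mem_filter, Finset.mem_powersetCard] at hT
      simp only [Finset.mem_powersetCard]
      exact ⟨Finset.sdiff_subset_sdiff (Finset.subset_univ T) le_rfl,
        by rw [Finset.card_sdiff_of_subset hT.2, hT.1.2]⟩
    · intro T1 h1 T2 h2 he
      simp only [Finset.mem_filter, Finset.mem_powersetCard] at h1 h2
      rw [← Finset.sdiff_union_of_subset h1.2, ← Finset.sdiff_union_of_subset h2.2, he]
    · intro U hU
      simp only [Finset.mem_powersetCard] at hU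
      have hd : Disjoint U P := Finset.disjoint_right.2 fun a haP haU => by
        exact (Finset.mem_sdiff.1 (hU.1 haU)).2 haP
      refine ⟨U ∪ P, ?_, ?_⟩
      · simp only [Finset.mem_filter, Finset.mem_powersetCard]
        refine ⟨⟨Finset.subset_univ _, ?_⟩, Finset.subset_union_right⟩
        rw [Finset.card_union_of_disjoint hd, hU.2]
        have : P.card ≤ Fintype.card X := by
          simpa using Finset.card_le_card (Finset.subset_univ P)
        omega
      · rw [Finset.union_sdiff_right, Finset.sdiff_eq_self_of_disjoint hd]
  · rw [Finset.card_eq_zero, Finset.filter_eq_empty_iff]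
    intro T hT hPT
    simp only [Finset.mem_powersetCard] at hT
    exact h (hT.2 ▸ Finset.card_le_card hPT)

lemma choose_shift (m k : ℕ) (hm : 1 ≤ m) (hk : 1 ≤ k) :
    m * (m - 1).choose (k - 1) = k * m.choose k := by
  have h := Nat.add_one_mul_choose_eq (m - 1) (k - 1)
  have h1 : m - 1 + 1 = m := by omega
  have h2 : k - 1 + 1 = k := by omega
  simp only [Nat.succ_eq_add_one, h1, h2] at h
  rw [h, mul_comm]

lemma choose_mono_step (a b : ℕ) : a.choose b ≤ (a + 1).choose (b + 1) := by
  rw [Nat.choose_succ_succ]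
  exact Nat.le_add_right _ _
/-- `pfD m k j` : number of `k`-subsets of an `m`-set containing a fixed `j`-set. -/
def pfD (m k j : ℕ) : ℕ := if j ≤ k then (m - j).choose (k - j) else 0

lemma pfD_succ_le (m k j : ℕ) (h : j + 1 ≤ m) : pfD m k (j + 1) ≤ pfD m k j := by
  unfold pfD
  split_ifs with h1 h2
  · have e1 : m - (j + 1) + 1 = m - j := by omega
    have e2 : k - (j + 1) + 1 = k - j := by omega
    calc (m - (j+1)).choose (k - (j+1)) ≤ (m - (j+1) + 1).choose (k - (j+1) + 1) :=
          choose_mono_step _ _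
      _ = (m - j).choose (k - j) := by rw [e1, e2]
  · omega
  · exact Nat.zero_le _
  · exact Nat.zero_le _

lemma pfD_one (m k : ℕ) (hk : 1 ≤ k) : pfD m k 1 = (m - 1).choose (k - 1) := if_pos hk

lemma pfD_id1 (m k : ℕ) (hm : 1 ≤ m) (hk : 1 ≤ k) : m * pfD m k 1 = k * m.choose k := by
  rw [pfD_one m k hk]; exact choose_shift m k hm hk

lemma pfD_id2 (m k : ℕ) (hm : 2 ≤ m) : (m - 1) * pfD m k 2 = (k - 1) * pfD m k 1 := by
  by_cases hk : 2 ≤ k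
  · rw [pfD_one m k (by omega)]
    unfold pfD
    rw [if_pos hk]
    have := choose_shift (m - 1) (k - 1) (by omega) (by omega)
    have e1 : m - 1 - 1 = m - 2 := by omega
    have e2 : k - 1 - 1 = k - 2 := by omega
    rw [e1, e2] at this
    exact this
  · have h1 : k - 1 = 0 := by omega
    unfold pfD
    rw [if_neg hk, h1]
    simp

lemma pfD_id3 (m k : ℕ) (hm : 3 ≤ m) : (m - 2) * pfD m k 3 = (k - 2) * pfD m k 2 := by
  by_cases hk : 3 ≤ k
  · unfold pfD
    rw [if_pos hk, if_pos (by omega : 2 ≤ k)]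
    have := choose_shift (m - 2) (k - 2) (by omega) (by omega)
    have e1 : m - 2 - 1 = m - 3 := by omega
    have e2 : k - 2 - 1 = k - 3 := by omega
    rw [e1, e2] at this
    exact this
  · have h1 : k - 2 = 0 := by omega
    unfold pfD
    rw [if_neg hk, h1]
    simp
section PF2

variable {X : Type*} [Fintype X] [DecidableEq X] {G : Type*} [Group G] [Fintype G]
  [DecidableEq G] [MulAction G X]

lemma stab_card [MulAction.IsPretransitive G X] (y : X) :
    Fintype.card X * (Finset.univ.filter (fun g : G => g • y = y)).card = Fintype.card G := by
  classical
  have h1 : (MulAction.stabilizer G y).index = Nat.card X :=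
    MulAction.index_stabilizer_of_transitive G y
  have h2 := Subgroup.index_mul_card (MulAction.stabilizer G y)
  have h3 : Nat.card (MulAction.stabilizer G y)
      = (Finset.univ.filter (fun g : G => g • y = y)).card := by
    rw [Nat.card_eq_fintype_card]
    rw [Fintype.card_subtype]
    congr 1
  rw [h1, h3, Nat.card_eq_fintype_card, Nat.card_eq_fintype_card] at h2
  exact h2

lemma sum_stab [MulAction.IsPretransitive G X] (hX : Nonempty X) :
    ∑ y : X, (Finset.univ.filter (fun g : G => g • y = y)).card = Fintype.card G := by
  have hm : 0 < Fintype.card X := Fintype.card_pos_iff.2 hX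
  apply Nat.eq_of_mul_eq_mul_left hm
  rw [Finset.mul_sum]
  calc ∑ y : X, Fintype.card X * (Finset.univ.filter (fun g : G => g • y = y)).card
      = ∑ _y : X, Fintype.card G := Finset.sum_congr rfl fun y _ => stab_card y
    _ = Fintype.card X * Fintype.card G := by
        rw [Finset.sum_const, Finset.card_univ, smul_eq_mul]

end PF2
section PF3

variable {X : Type*} [Fintype X] [DecidableEq X] {G : Type*} [Group G] [Fintype G]
  [DecidableEq G] [MulAction G X]

lemma sum_cardA (x₀ : X) (k : ℕ) (hk : 1 ≤ k) :
    ∑ T ∈ Finset.powersetCard k (Finset.univ : Finset X),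
      (Finset.univ.filter (fun g : G => g • x₀ ∈ T)).card
    = Fintype.card G * (Fintype.card X - 1).choose (k - 1) := by
  simp only [Finset.card_filter]
  rw [Finset.sum_comm]
  have key : ∀ g : G, (∑ T ∈ Finset.powersetCard k (Finset.univ : Finset X),
      if g • x₀ ∈ T then (1:ℕ) else 0) = (Fintype.card X - 1).choose (k - 1) := by
    intro g
    rw [← Finset.card_filter]
    have he : (Finset.powersetCard k (Finset.univ : Finset X)).filter (fun T => g • x₀ ∈ T)
        = (Finset.powersetCard k (Finset.univ : Finset X)).filter
            (fun T => ({g • x₀} : Finset X) ⊆ T) := by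
      apply Finset.filter_congr
      intro T _
      simp
    rw [he, card_supersets, Finset.card_singleton, if_pos hk]
  rw [Finset.sum_congr rfl fun g _ => key g, Finset.sum_const, Finset.card_univ, smul_eq_mul]

lemma cnt_le (k : ℕ) (hm : 3 ≤ Fintype.card X) (hk : 1 ≤ k) (x₀ : X) (g : G) (y : X) :
    ((Finset.powersetCard k (Finset.univ : Finset X)).filter
        (fun T => pfTriple x₀ g y ⊆ T)).card
      ≤ pfD (Fintype.card X) k 3
        + (if y = x₀ ∨ y = g • x₀ ∨ g • y = y then pfD (Fintype.card X) k 2 else 0)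
        + (if g • x₀ = x₀ ∧ y = x₀ then pfD (Fintype.card X) k 1 else 0) := by
  rw [card_supersets]
  set m := Fintype.card X with hmdef
  have hcnt : (if (pfTriple x₀ g y).card ≤ k
      then (m - (pfTriple x₀ g y).card).choose (k - (pfTriple x₀ g y).card) else 0)
      = pfD m k (pfTriple x₀ g y).card := rfl
  rw [hcnt]
  have hj1 : 1 ≤ (pfTriple x₀ g y).card := Finset.card_pos.2 ⟨g • x₀, by simp [pfTriple]⟩
  have hj3 : (pfTriple x₀ g y).card ≤ 3 := by
    have h1 := Finset.card_insert_le (g • x₀) (insert y {g • y})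
    have h2 := Finset.card_insert_le y ({g • y} : Finset X)
    have h3 : ({g • y} : Finset X).card = 1 := Finset.card_singleton _
    unfold pfTriple
    omega
  have hd32 : pfD m k 3 ≤ pfD m k 2 := pfD_succ_le m k 2 (by omega)
  have hd21 : pfD m k 2 ≤ pfD m k 1 := pfD_succ_le m k 1 (by omega)
  by_cases hsp : y = x₀ ∨ y = g • x₀ ∨ g • y = y
  · rw [if_pos hsp]
    by_cases hss : g • x₀ = x₀ ∧ y = x₀
    · rw [if_pos hss]
      have hle : pfD m k (pfTriple x₀ g y).card ≤ pfD m k 1 := by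
        have : (pfTriple x₀ g y).card = 1 ∨ (pfTriple x₀ g y).card = 2
            ∨ (pfTriple x₀ g y).card = 3 := by omega
        rcases this with h | h | h
        · rw [h]
        · rw [h]; exact hd21
        · rw [h]; exact hd32.trans hd21
      exact hle.trans (Nat.le_add_left _ _)
    · rw [if_neg hss]
      have hj2 : 2 ≤ (pfTriple x₀ g y).card := by
        by_contra hcon
        have hle1 : (pfTriple x₀ g y).card ≤ 1 := by omega
        have hall := Finset.card_le_one.mp hle1
        have e1 : y = g • x₀ :=
          hall y (by simp [pfTriple]) (g • x₀) (by simp [pfTriple])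
        have e2 : g • y = g • x₀ :=
          hall (g • y) (by simp [pfTriple]) (g • x₀) (by simp [pfTriple])
        have e3 : y = x₀ := MulAction.injective g e2
        exact hss ⟨by rw [← e1, e3], e3⟩
      have hle : pfD m k (pfTriple x₀ g y).card ≤ pfD m k 2 := by
        have : (pfTriple x₀ g y).card = 2 ∨ (pfTriple x₀ g y).card = 3 := by omega
        rcases this with h | h
        · rw [h]
        · rw [h]; exact hd32
      rw [add_zero]
      exact hle.trans (Nat.le_add_left _ _)
  · rw [if_neg hsp]
    push_neg at hsp
    obtain ⟨h1, h2, h3⟩ := hsp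
    have hss : ¬(g • x₀ = x₀ ∧ y = x₀) := fun h => h1 h.2
    rw [if_neg hss]
    have hjeq : (pfTriple x₀ g y).card = 3 := by
      unfold pfTriple
      rw [Finset.card_insert_of_notMem, Finset.card_insert_of_notMem,
        Finset.card_singleton]
      · simpa using fun h => h3 h.symm
      · simp only [Finset.mem_insert, Finset.mem_singleton]
        push_neg
        exact ⟨fun h => h2 h.symm, fun h => h1 (MulAction.injective g h.symm)⟩
    rw [hjeq]
    simp
end PF3

/-- Pure arithmetic core: combining the binomial identities. -/
lemma arith_core (m n k N C1 D2 D3 s : ℕ) (hm : 3 ≤ m) (hk : 1 ≤ k)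
    (h1 : m * C1 = k * N) (h2 : (m - 1) * D2 = (k - 1) * C1)
    (h3 : (m - 2) * D3 = (k - 2) * D2) (h4 : m * s = n) :
    (m - 2) ^ 2 * (n * (m * D3) + 3 * (n * D2) + s * C1) ≤ k ^ 3 * (n * N) := by
  obtain ⟨M, rfl⟩ : ∃ M, m = M + 3 := ⟨m - 3, by omega⟩
  have e1 : M + 3 - 1 = M + 2 := rfl
  have e2 : M + 3 - 2 = M + 1 := rfl
  rw [e1] at h2; rw [e2] at h3; rw [e2]
  -- bound each of the three terms
  have t1 : (M + 1) ^ 2 * (n * ((M + 3) * D3)) ≤ (k * ((k-1) * (k-2))) * (n * N) := by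
    calc (M + 1) ^ 2 * (n * ((M + 3) * D3))
        = (n * (M + 3)) * ((M + 1) * ((M + 1) * D3)) := by ring
      _ ≤ (n * (M + 3)) * ((M + 2) * ((M + 1) * D3)) := by gcongr <;> omega
      _ = (n * (M + 3)) * ((M + 2) * ((k - 2) * D2)) := by rw [h3]
      _ = (n * ((k - 2) * ((M + 3) * ((M + 2) * D2)))) := by ring
      _ = (n * ((k - 2) * ((M + 3) * ((k - 1) * C1)))) := by rw [h2]
      _ = (n * ((k - 2) * ((k - 1) * ((M + 3) * C1)))) := by ring
      _ = (n * ((k - 2) * ((k - 1) * (k * N)))) := by rw [h1]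
      _ = (k * ((k-1) * (k-2))) * (n * N) := by ring
  have t2 : (M + 1) ^ 2 * (3 * (n * D2)) ≤ (3 * (k * (k - 1))) * (n * N) := by
    calc (M + 1) ^ 2 * (3 * (n * D2))
        = (3 * n) * ((M+1) * ((M+1) * D2)) := by ring
      _ ≤ (3 * n) * ((M+3) * ((M+2) * D2)) := by gcongr <;> omega
      _ = (3 * n) * ((M+3) * ((k-1) * C1)) := by rw [h2]
      _ = (3 * (n * (k-1))) * ((M+3) * C1) := by ring
      _ = (3 * (n * (k-1))) * (k * N) := by rw [h1]
      _ = (3 * (k * (k - 1))) * (n * N) := by ring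
  have t3 : (M + 1) ^ 2 * (s * C1) ≤ k * (n * N) := by
    calc (M + 1) ^ 2 * (s * C1)
        ≤ (M + 3) ^ 2 * (s * C1) := by gcongr <;> omega
      _ = ((M + 3) * s) * ((M + 3) * C1) := by ring
      _ = n * (k * N) := by rw [h4, h1]
      _ = k * (n * N) := by ring
  have hkk : k * ((k-1) * (k-2)) + 3 * (k * (k-1)) + k ≤ k ^ 3 := by
    rcases Nat.exists_eq_add_of_le hk with ⟨a, rfl⟩
    rcases a with _ | b
    · simp
    · have ha : 1 + (b+1) - 1 = b + 1 := by omega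
      have hb : 1 + (b+1) - 2 = b := by omega
      rw [ha, hb]
      nlinarith [b.zero_le]
  calc (M + 1) ^ 2 * (n * ((M + 3) * D3) + 3 * (n * D2) + s * C1)
      = (M + 1) ^ 2 * (n * ((M + 3) * D3)) + (M + 1) ^ 2 * (3 * (n * D2))
        + (M + 1) ^ 2 * (s * C1) := by ring
    _ ≤ (k * ((k-1) * (k-2))) * (n * N) + (3 * (k * (k - 1))) * (n * N) + k * (n * N) :=
        Nat.add_le_add (Nat.add_le_add t1 t2) t3
    _ = (k * ((k-1) * (k-2)) + 3 * (k * (k-1)) + k) * (n * N) := by ring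
    _ ≤ k ^ 3 * (n * N) := Nat.mul_le_mul_right _ hkk
lemma ite_or3 (p q r : Prop) [Decidable p] [Decidable q] [Decidable r] (d : ℕ) :
    (if p ∨ q ∨ r then d else 0)
      ≤ (if p then d else 0) + (if q then d else 0) + (if r then d else 0) := by
  split_ifs <;> first | omega | tauto


/-- If a finite group `G` of order `n` acts transitively on a set of size
`m > 2`, then for any `1 ≤ k ≤ m − 1` one has
`α(G) ≥ k·n/m − k³·n/(m−2)²`. -/
theorem alpha_lower_bound_averaging {G X : Type*} [Group G] [Fintype G]
    [Fintype X] [MulAction G X] [MulAction.IsPretransitive G X]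
    (hm : 2 < Fintype.card X) (k : ℕ) (hk1 : 1 ≤ k)
    (hk2 : k ≤ Fintype.card X - 1) :
    (k : ℝ) * Fintype.card G / Fintype.card X
      - (k : ℝ) ^ 3 * Fintype.card G / ((Fintype.card X : ℝ) - 2) ^ 2
      ≤ (alphaPF G : ℝ) := by

  classical
  have hX : Nonempty X := Fintype.card_pos_iff.mp (by omega)
  obtain ⟨x₀⟩ := hX
  set m := Fintype.card X with hm_def
  set n := Fintype.card G with hn_def
  have hm3 : 3 ≤ m := hm
  have hkm : k ≤ m := by omega
  set C1 := (m - 1).choose (k - 1) with hC1_def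
  set D2 := pfD m k 2 with hD2_def
  set D3 := pfD m k 3 with hD3_def
  set s := (Finset.univ.filter (fun g : G => g • x₀ = x₀)).card with hs_def
  set N := m.choose k with hN_def
  -- the collection of k-subsets
  have hTcard : (Finset.powersetCard k (Finset.univ : Finset X)).card = N := by
    rw [Finset.card_powersetCard, Finset.card_univ]
  -- sum of |A T|
  have hA : ∑ T ∈ Finset.powersetCard k (Finset.univ : Finset X),
      (Finset.univ.filter (fun g : G => g • x₀ ∈ T)).card = n * C1 :=
    sum_cardA x₀ k hk1
  -- sum of |Bad T|
  have hBad : ∑ T ∈ Finset.powersetCard k (Finset.univ : Finset X),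
      (pfBad G x₀ T).card ≤ n * (m * D3) + 3 * (n * D2) + s * C1 := by
    have hC1D : pfD m k 1 = C1 := pfD_one m k hk1
    calc ∑ T ∈ Finset.powersetCard k (Finset.univ : Finset X), (pfBad G x₀ T).card
        ≤ ∑ T ∈ Finset.powersetCard k (Finset.univ : Finset X),
            ∑ g : G, ∑ y : X, (if pfTriple x₀ g y ⊆ T then (1:ℕ) else 0) :=
          Finset.sum_le_sum fun T _ => card_bad_le x₀ T
      _ = ∑ g : G, ∑ y : X, ∑ T ∈ Finset.powersetCard k (Finset.univ : Finset X),
            (if pfTriple x₀ g y ⊆ T then (1:ℕ) else 0) := by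
          rw [Finset.sum_comm]
          exact Finset.sum_congr rfl fun g _ => Finset.sum_comm
      _ = ∑ g : G, ∑ y : X,
            ((Finset.powersetCard k (Finset.univ : Finset X)).filter
              (fun T => pfTriple x₀ g y ⊆ T)).card :=
          Finset.sum_congr rfl fun g _ => Finset.sum_congr rfl fun y _ =>
            (Finset.card_filter _ _).symm
      _ ≤ ∑ g : G, ∑ y : X, (D3
            + (if y = x₀ ∨ y = g • x₀ ∨ g • y = y then D2 else 0)
            + (if g • x₀ = x₀ ∧ y = x₀ then pfD m k 1 else 0)) :=
          Finset.sum_le_sum fun g _ => Finset.sum_le_sum fun y _ => cnt_le k hm3 hk1 x₀ g y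
      _ = (∑ g : G, ∑ y : X, D3)
          + (∑ g : G, ∑ y : X, (if y = x₀ ∨ y = g • x₀ ∨ g • y = y then D2 else 0))
          + (∑ g : G, ∑ y : X, (if g • x₀ = x₀ ∧ y = x₀ then pfD m k 1 else 0)) := by
          simp [Finset.sum_add_distrib]
      _ ≤ n * (m * D3) + 3 * (n * D2) + s * C1 := by
          have p1 : (∑ _g : G, ∑ _y : X, D3) = n * (m * D3) := by
            simp [Finset.sum_const, Finset.card_univ, smul_eq_mul]
            rfl
          have p3 : (∑ g : G, ∑ y : X,
              (if g • x₀ = x₀ ∧ y = x₀ then pfD m k 1 else 0)) = s * C1 := by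
            have hg : ∀ g : G, (∑ y : X, (if g • x₀ = x₀ ∧ y = x₀ then pfD m k 1 else 0))
                = (if g • x₀ = x₀ then C1 else 0) := by
              intro g
              by_cases hp : g • x₀ = x₀ <;> simp [hp, Finset.sum_ite_eq', hC1D]
            rw [Finset.sum_congr rfl fun g _ => hg g, ← Finset.sum_filter,
              Finset.sum_const, smul_eq_mul]
          have p2 : (∑ g : G, ∑ y : X,
              (if y = x₀ ∨ y = g • x₀ ∨ g • y = y then D2 else 0)) ≤ 3 * (n * D2) := by
            calc ∑ g : G, ∑ y : X, (if y = x₀ ∨ y = g • x₀ ∨ g • y = y then D2 else 0)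
                ≤ ∑ g : G, ∑ y : X, ((if y = x₀ then D2 else 0)
                    + (if y = g • x₀ then D2 else 0) + (if g • y = y then D2 else 0)) :=
                  Finset.sum_le_sum fun g _ => Finset.sum_le_sum fun y _ =>
                    ite_or3 _ _ _ D2
              _ = (∑ g : G, ∑ y : X, (if y = x₀ then D2 else 0))
                  + (∑ g : G, ∑ y : X, (if y = g • x₀ then D2 else 0))
                  + (∑ g : G, ∑ y : X, (if g • y = y then D2 else 0)) := by
                  simp only [Finset.sum_add_distrib]
              _ = n * D2 + n * D2 + (∑ y : X, ∑ g : G, (if g • y = y then D2 else 0)) := by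
                  rw [Finset.sum_comm (s := Finset.univ) (t := Finset.univ)
                    (f := fun g y => if g • y = y then D2 else 0)]
                  simp [Finset.sum_ite_eq', Finset.sum_const, Finset.card_univ,
                    smul_eq_mul, mul_add]
                  rfl
              _ = n * D2 + n * D2 + n * D2 := by
                  congr 1
                  have hy : ∀ y : X, (∑ g : G, (if g • y = y then D2 else 0))
                      = (Finset.univ.filter (fun g : G => g • y = y)).card * D2 := by
                    intro y
                    rw [← Finset.sum_filter, Finset.sum_const, smul_eq_mul]
                  rw [Finset.sum_congr rfl fun y _ => hy y, ← Finset.sum_mul, sum_stab ⟨x₀⟩]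
              _ = 3 * (n * D2) := by ring
          omega
  -- combine: n * C1 ≤ sum good + bad bound
  have hsplit : n * C1 ≤ (∑ T ∈ Finset.powersetCard k (Finset.univ : Finset X),
      (pfGood G x₀ T).card) + (n * (m * D3) + 3 * (n * D2) + s * C1) := by
    calc n * C1 = ∑ T ∈ Finset.powersetCard k (Finset.univ : Finset X),
        (Finset.univ.filter (fun g : G => g • x₀ ∈ T)).card := hA.symm
      _ ≤ ∑ T ∈ Finset.powersetCard k (Finset.univ : Finset X),
          ((pfGood G x₀ T).card + (pfBad G x₀ T).card) :=
        Finset.sum_le_sum fun T _ => cardA_le x₀ T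
      _ = (∑ T ∈ Finset.powersetCard k (Finset.univ : Finset X), (pfGood G x₀ T).card)
          + (∑ T ∈ Finset.powersetCard k (Finset.univ : Finset X), (pfBad G x₀ T).card) :=
        Finset.sum_add_distrib
      _ ≤ _ := by omega
  -- averaging: pick a good T₀
  have hne : (Finset.powersetCard k (Finset.univ : Finset X)).Nonempty := by
    obtain ⟨T, hT, hTc⟩ := Finset.exists_subset_card_eq (s := (Finset.univ : Finset X)) (n := k)
      (by rw [Finset.card_univ]; omega)
    exact ⟨T, Finset.mem_powersetCard.2 ⟨hT, hTc⟩⟩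
  obtain ⟨T₀, hT₀, havg⟩ := Finset.exists_le_of_sum_le (s := Finset.powersetCard k
      (Finset.univ : Finset X))
      (f := fun _ => ∑ T ∈ Finset.powersetCard k (Finset.univ : Finset X), (pfGood G x₀ T).card)
      (g := fun T => N * (pfGood G x₀ T).card) hne
      (by rw [Finset.sum_const, ← Finset.mul_sum, hTcard, smul_eq_mul])
  have halpha : (pfGood G x₀ T₀).card ≤ alphaPF G :=
    alphaPF_ge _ (pfGood_productFree x₀ T₀)
  -- arithmetic facts
  have f1 : m * C1 = k * N := by
    have h := pfD_id1 m k (by omega) hk1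
    rwa [pfD_one m k hk1] at h
  have f2 : (m - 1) * D2 = (k - 1) * C1 := by
    have h := pfD_id2 m k (by omega)
    rwa [pfD_one m k hk1] at h
  have f3 : (m - 2) * D3 = (k - 2) * D2 := pfD_id3 m k hm3
  have f4 : m * s = n := stab_card x₀
  have harith := arith_core m n k N C1 D2 D3 s hm3 hk1 f1 f2 f3 f4
  -- move to the reals
  have h2m : 2 ≤ m := by omega
  have hR : ((m - 2 : ℕ) : ℝ) = (m : ℝ) - 2 := by
    rw [Nat.cast_sub h2m, Nat.cast_ofNat]
  rw [← hR]
  have hNpos : (0:ℝ) < (N : ℝ) := by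
    exact_mod_cast Nat.choose_pos hkm
  have hmpos : (0:ℝ) < (m : ℝ) := by exact_mod_cast (by omega : 0 < m)
  have hRpos : (0:ℝ) < ((m - 2 : ℕ) : ℝ) := by exact_mod_cast (by omega : 0 < m - 2)
  have f1R : (m : ℝ) * C1 = (k : ℝ) * N := by exact_mod_cast f1
  have key1 : (k : ℝ) * n / m * N = (n : ℝ) * C1 := by
    field_simp
    linear_combination (-(n : ℝ)) * f1R
  have harithR : ((m - 2 : ℕ) : ℝ) ^ 2 * ((n : ℝ) * ((m:ℝ) * D3) + 3 * ((n:ℝ) * D2)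
      + (s : ℝ) * C1) ≤ (k : ℝ) ^ 3 * ((n : ℝ) * N) := by exact_mod_cast harith
  have key2 : (n : ℝ) * ((m:ℝ) * D3) + 3 * ((n:ℝ) * D2) + (s : ℝ) * C1
      ≤ (k : ℝ) ^ 3 * n / ((m - 2 : ℕ) : ℝ) ^ 2 * N := by
    rw [div_mul_eq_mul_div, le_div_iff₀ (by positivity)]
    calc ((n : ℝ) * ((m:ℝ) * D3) + 3 * ((n:ℝ) * D2) + (s : ℝ) * C1)
          * ((m - 2 : ℕ) : ℝ) ^ 2
        = ((m - 2 : ℕ) : ℝ) ^ 2 * ((n : ℝ) * ((m:ℝ) * D3) + 3 * ((n:ℝ) * D2)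
          + (s : ℝ) * C1) := by ring
      _ ≤ (k : ℝ) ^ 3 * ((n : ℝ) * N) := harithR
      _ = (k : ℝ) ^ 3 * n * N := by ring
  have hsplitR : (n : ℝ) * C1 - ((n : ℝ) * ((m:ℝ) * D3) + 3 * ((n:ℝ) * D2) + (s : ℝ) * C1)
      ≤ ((∑ T ∈ Finset.powersetCard k (Finset.univ : Finset X), (pfGood G x₀ T).card : ℕ) : ℝ) := by
    have := hsplit
    have hcast : (n : ℝ) * C1 ≤ ((∑ T ∈ Finset.powersetCard k (Finset.univ : Finset X),
        (pfGood G x₀ T).card : ℕ) : ℝ)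
        + ((n : ℝ) * ((m:ℝ) * D3) + 3 * ((n:ℝ) * D2) + (s : ℝ) * C1) := by
      exact_mod_cast this
    linarith
  have havgR : ((∑ T ∈ Finset.powersetCard k (Finset.univ : Finset X),
      (pfGood G x₀ T).card : ℕ) : ℝ) ≤ (N : ℝ) * ((pfGood G x₀ T₀).card : ℝ) := by
    exact_mod_cast havg
  have halphaR : ((pfGood G x₀ T₀).card : ℝ) ≤ (alphaPF G : ℝ) := by exact_mod_cast halpha
  rw [← mul_le_mul_iff_left₀ hNpos]
  calc ((k : ℝ) * n / m - (k : ℝ) ^ 3 * n / ((m - 2 : ℕ) : ℝ) ^ 2) * N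
      = (k : ℝ) * n / m * N - (k : ℝ) ^ 3 * n / ((m - 2 : ℕ) : ℝ) ^ 2 * N := by ring
    _ = (n : ℝ) * C1 - (k : ℝ) ^ 3 * n / ((m - 2 : ℕ) : ℝ) ^ 2 * N := by rw [key1]
    _ ≤ (n : ℝ) * C1 - ((n : ℝ) * ((m:ℝ) * D3) + 3 * ((n:ℝ) * D2) + (s : ℝ) * C1) := by
        linarith
    _ ≤ ((∑ T ∈ Finset.powersetCard k (Finset.univ : Finset X),
        (pfGood G x₀ T).card : ℕ) : ℝ) := hsplitR
    _ ≤ (N : ℝ) * ((pfGood G x₀ T₀).card : ℝ) := havgR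
    _ ≤ (N : ℝ) * (alphaPF G : ℝ) := by
        exact mul_le_mul_of_nonneg_left halphaR (le_of_lt hNpos)
    _ = (alphaPF G : ℝ) * N := by ring
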